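/- (Lemma 4.1, first part: dichotomy for the twisted Sierpiński gasket.) Let x0, y0, z0 > 0. There exists a twisted compatible resistance sequence (x_n, y_n, z_n)_{n≥0} of positive triples with initial triple (x0, y0, z0) if and only if, after a permutation of the three coordinates, x0 ≥ y0 = z0. In that case x_n ≥ y_n = z_n > 0 for all n ≥ 0 (in the same coordinates), and the sequence is uniquely determined by (x0, y0, z0). -/

import Mathlib

noncomputable section

/-- Twisted Δ-Y transfer term `ψ(x; y, z) = 2yz/(x+y+z)`. -/
def psi (x y z : ℝ) : ℝ := 2 * y * z / (x + y + z)

/-- A twisted compatible resistance sequence of positive triples. -/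
def IsTwistedCompat (X Y Z : ℕ → ℝ) : Prop :=
  (∀ n, 0 < X n ∧ 0 < Y n ∧ 0 < Z n) ∧
  ∀ n, X n = X (n + 1) + psi (X (n + 1)) (Y (n + 1)) (Z (n + 1)) ∧
       Y n = Y (n + 1) + psi (Y (n + 1)) (Z (n + 1)) (X (n + 1)) ∧
       Z n = Z (n + 1) + psi (Z (n + 1)) (X (n + 1)) (Y (n + 1))

open Filter Topology

lemma psi_pos {x y z : ℝ} (hx : 0 < x) (hy : 0 < y) (hz : 0 < z) : 0 < psi x y z := by
  unfold psi; positivity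

lemma diff_step {x y z : ℝ} (hx : 0 < x) (hy : 0 < y) (hz : 0 < z) :
    (x + psi x y z) - (y + psi y z x) = (x - y) * (x + y - z) / (x + y + z) := by
  have hs : x + y + z ≠ 0 := by positivity
  unfold psi
  field_simp
  ring

lemma abs_diff_step {x y z : ℝ} (hx : 0 < x) (hy : 0 < y) (hz : 0 < z) :
    |(x + psi x y z) - (y + psi y z x)| ≤ |x - y| := by
  rw [diff_step hx hy hz]
  have hs : 0 < x + y + z := by positivity
  rw [abs_div, abs_mul, abs_of_pos hs]
  rw [div_le_iff₀ hs]
  have h1 : |x + y - z| ≤ x + y + z := by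
    rw [abs_le]; constructor <;> nlinarith
  calc |x - y| * |x + y - z| ≤ |x - y| * (x + y + z) := by
        exact mul_le_mul_of_nonneg_left h1 (abs_nonneg _)
    _ = _ := rfl

lemma compat_cyclic {X Y Z : ℕ → ℝ} (h : IsTwistedCompat X Y Z) : IsTwistedCompat Y Z X :=
  ⟨fun n => ⟨(h.1 n).2.1, (h.1 n).2.2, (h.1 n).1⟩,
   fun n => ⟨(h.2 n).2.1, (h.2 n).2.2, (h.2 n).1⟩⟩

variable {X Y Z : ℕ → ℝ}

lemma compat_absdiff_mono (h : IsTwistedCompat X Y Z) (n : ℕ) :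
    |Y n - Z n| ≤ |Y (n+1) - Z (n+1)| := by
  obtain ⟨hx, hy, hz⟩ := h.1 (n+1)
  have e := h.2 n
  rw [e.2.1, e.2.2]
  exact abs_diff_step hy hz hx

lemma compat_absdiff_le (h : IsTwistedCompat X Y Z) (k : ℕ) :
    ∀ m, k ≤ m → |Y k - Z k| ≤ |Y m - Z m| := by
  intro m hm
  induction m with
  | zero => simp_all
  | succ m ih =>
    rcases Nat.lt_or_ge k (m+1) with h1 | h1
    · exact le_trans (ih (Nat.lt_succ_iff.mp h1)) (compat_absdiff_mono h m)
    · have : k = m + 1 := le_antisymm hm h1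
      subst this; rfl

lemma compat_absdiff_le_lim (h : IsTwistedCompat X Y Z) {b c : ℝ}
    (hb : Tendsto Y atTop (𝓝 b)) (hc : Tendsto Z atTop (𝓝 c)) (k : ℕ) :
    |Y k - Z k| ≤ |b - c| := by
  refine ge_of_tendsto ((hb.sub hc).abs) ?_
  filter_upwards [eventually_ge_atTop k] with m hm
  exact compat_absdiff_le h k m hm

variable {X Y Z X' Y' Z' : ℕ → ℝ}

lemma compat_lim (h : IsTwistedCompat X Y Z) :
    ∃ a : ℝ, 0 ≤ a ∧ Filter.Tendsto X atTop (𝓝 a) := by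
  have hanti : Antitone X := by
    apply antitone_nat_of_succ_le
    intro n
    have := (h.2 n).1
    have hp := psi_pos (h.1 (n+1)).1 (h.1 (n+1)).2.1 (h.1 (n+1)).2.2
    linarith
  have hbdd : BddBelow (Set.range X) := by
    refine ⟨0, ?_⟩
    rintro x ⟨n, rfl⟩
    exact le_of_lt (h.1 n).1
  refine ⟨⨅ n, X n, ?_, tendsto_atTop_ciInf hanti hbdd⟩
  exact le_ciInf fun n => le_of_lt (h.1 n).1

lemma compat_shift_tendsto {a : ℝ} (ha : Tendsto X atTop (𝓝 a)) :
    Tendsto (fun n => X (n+1)) atTop (𝓝 a) :=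
  ha.comp (tendsto_add_atTop_nat 1)

lemma compat_prod_zero (h : IsTwistedCompat X Y Z) {a b c : ℝ}
    (ha : Tendsto X atTop (𝓝 a)) (hb : Tendsto Y atTop (𝓝 b)) (hc : Tendsto Z atTop (𝓝 c))
    (hs : 0 < a + b + c) : b * c = 0 := by
  have h1 : Tendsto (fun n => X n - X (n+1)) atTop (𝓝 (a - a)) :=
    ha.sub (compat_shift_tendsto ha)
  have h2 : ∀ n, X n - X (n+1) =
      2 * Y (n+1) * Z (n+1) / (X (n+1) + Y (n+1) + Z (n+1)) := by
    intro n
    have := (h.2 n).1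
    unfold psi at this
    linarith
  have h3 : Tendsto (fun n => 2 * Y (n+1) * Z (n+1) / (X (n+1) + Y (n+1) + Z (n+1)))
      atTop (𝓝 (2 * b * c / (a + b + c))) := by
    exact (((tendsto_const_nhds.mul (compat_shift_tendsto hb)).mul
      (compat_shift_tendsto hc)).div
      (((compat_shift_tendsto ha).add (compat_shift_tendsto hb)).add
        (compat_shift_tendsto hc)) (ne_of_gt hs))
  have h4 : a - a = 2 * b * c / (a + b + c) := by
    apply tendsto_nhds_unique h1
    simpa only [h2] using h3
  have : 2 * b * c / (a + b + c) = 0 := by linarith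
  rcases div_eq_zero_iff.mp this with h | h
  · linear_combination h / 2
  · exact absurd h (ne_of_gt hs)

lemma main_case (h : IsTwistedCompat X Y Z) {a : ℝ}
    (ha : Tendsto X atTop (𝓝 a)) (hapos : 0 < a)
    (hb : Tendsto Y atTop (𝓝 0)) (hc : Tendsto Z atTop (𝓝 0)) :
    ∀ k, Y k = Z k ∧ Y k < X k := by
  have hYZ : ∀ k, Y k = Z k := by
    intro k
    have := compat_absdiff_le_lim h hb hc k
    simp only [sub_zero, sub_self, abs_zero] at this
    have := abs_nonneg (Y k - Z k)
    have h0 : |Y k - Z k| = 0 := le_antisymm (by simpa using compat_absdiff_le_lim h hb hc k) (abs_nonneg _)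
    exact sub_eq_zero.mp (abs_eq_zero.mp h0)
  -- difference D k = X k - Y k
  have hD : Tendsto (fun k => X k - Y k) atTop (𝓝 a) := by
    simpa using ha.sub hb
  have hstep : ∀ k, X k - Y k = (X (k+1) - Y (k+1)) * (X (k+1)) / (X (k+1) + Y (k+1) + Z (k+1)) := by
    intro k
    obtain ⟨hx, hy, hz⟩ := h.1 (k+1)
    have e := h.2 k
    rw [e.1, e.2.1, diff_step hx hy hz]
    have : X (k+1) + Y (k+1) - Z (k+1) = X (k+1) := by
      rw [hYZ (k+1)]; ring
    rw [this]
  have hiff : ∀ k, (0 < X k - Y k ↔ 0 < X (k+1) - Y (k+1)) := by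
    intro k
    obtain ⟨hx, hy, hz⟩ := h.1 (k+1)
    rw [hstep k]
    have hs : 0 < X (k+1) + Y (k+1) + Z (k+1) := by positivity
    constructor
    · intro hk
      by_contra hcon
      push_neg at hcon
      have : (X (k+1) - Y (k+1)) * (X (k+1)) / (X (k+1) + Y (k+1) + Z (k+1)) ≤ 0 := by
        apply div_nonpos_of_nonpos_of_nonneg _ (le_of_lt hs)
        exact mul_nonpos_of_nonpos_of_nonneg hcon (le_of_lt hx)
      linarith
    · intro hk
      positivity
  have hiff0 : ∀ k, (0 < X k - Y k ↔ 0 < X 0 - Y 0) := by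
    intro k
    induction k with
    | zero => rfl
    | succ k ih => rw [← hiff k]; exact ih
  have hN : ∃ N, 0 < X N - Y N := by
    have := hD.eventually (eventually_gt_nhds (half_lt_self hapos))
    rcases this.exists with ⟨N, hN⟩
    exact ⟨N, lt_trans (half_pos hapos) hN⟩
  obtain ⟨N, hN⟩ := hN
  have h0 : 0 < X 0 - Y 0 := (hiff0 N).mp hN
  intro k
  exact ⟨hYZ k, by linarith [(hiff0 k).mpr h0]⟩

lemma eq_of_lim_eq {W V : ℕ → ℝ} (h : IsTwistedCompat X W V) {b c : ℝ}
    (hb : Tendsto W atTop (𝓝 b)) (hc : Tendsto V atTop (𝓝 c)) (hbc : b = c) (k : ℕ) :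
    W k = V k := by
  have h0 : |W k - V k| ≤ |b - c| := compat_absdiff_le_lim h hb hc k
  rw [hbc, sub_self, abs_zero] at h0
  exact sub_eq_zero.mp (abs_eq_zero.mp (le_antisymm h0 (abs_nonneg _)))

lemma trichotomy (h : IsTwistedCompat X Y Z) :
    (∀ k, X k = Y k ∧ Y k = Z k) ∨ (∀ k, Y k = Z k ∧ Y k < X k) ∨
    (∀ k, Z k = X k ∧ Z k < Y k) ∨ (∀ k, X k = Y k ∧ X k < Z k) := by
  obtain ⟨a, ha0, ha⟩ := compat_lim h
  obtain ⟨b, hb0, hb⟩ := compat_lim (compat_cyclic h)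
  obtain ⟨c, hc0, hc⟩ := compat_lim (compat_cyclic (compat_cyclic h))
  -- note : compat_cyclic h : IsTwistedCompat Y Z X, so its first component is Y
  rcases eq_or_lt_of_le (by linarith : (0:ℝ) ≤ a + b + c) with hs | hs
  · -- all limits zero
    have ha' : a = 0 := by linarith
    have hb' : b = 0 := by linarith
    have hc' : c = 0 := by linarith
    subst ha'; subst hb'; subst hc'
    left
    intro k
    constructor
    · exact eq_of_lim_eq (compat_cyclic (compat_cyclic h)) ha hb rfl k
    · exact eq_of_lim_eq h hb hc rfl k
  · have hbc : b * c = 0 := compat_prod_zero h ha hb hc hs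
    have hca : c * a = 0 := compat_prod_zero (compat_cyclic h) hb hc ha (by linarith)
    have hab : a * b = 0 := compat_prod_zero (compat_cyclic (compat_cyclic h)) hc ha hb (by linarith)
    rcases mul_eq_zero.mp hbc with hb' | hc'
    · rcases mul_eq_zero.mp hca with hc'' | ha''
      · -- b = 0, c = 0, a > 0
        have hapos : 0 < a := by linarith
        right; left
        exact main_case h ha hapos (by rwa [hb'] at hb) (by rwa [hc''] at hc)
      · -- b = 0, a = 0, c > 0
        have hcpos : 0 < c := by linarith
        right; right; right
        exact main_case (compat_cyclic (compat_cyclic h)) hc hcpos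
          (by rwa [ha''] at ha) (by rwa [hb'] at hb)
    · rcases mul_eq_zero.mp hab with ha'' | hb''
      · -- c = 0, a = 0, b > 0
        have hbpos : 0 < b := by linarith
        right; right; left
        exact main_case (compat_cyclic h) hb hbpos (by rwa [hc'] at hc) (by rwa [ha''] at ha)
      · -- c = 0, b = 0, a > 0
        have hapos : 0 < a := by linarith
        right; left
        exact main_case h ha hapos (by rwa [hb''] at hb) (by rwa [hc'] at hc)

def nxt (p : ℝ × ℝ) : ℝ × ℝ :=
  let r := p.1 / p.2
  let t := (3*r - 2 + Real.sqrt (9*r^2 - 4*r - 4)) / 2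
  let b := p.2 * (t + 2) / (3*t + 2)
  (t * b, b)

lemma nxt_spec {x y : ℝ} (hy : 0 < y) (hxy : y ≤ x) :
    0 < (nxt (x, y)).2 ∧ (nxt (x, y)).2 ≤ (nxt (x, y)).1 ∧
    (nxt (x, y)).1 + psi (nxt (x, y)).1 (nxt (x, y)).2 (nxt (x, y)).2 = x ∧
    (nxt (x, y)).2 + psi (nxt (x, y)).2 (nxt (x, y)).2 (nxt (x, y)).1 = y ∧
    (nxt (x, y)).2 + psi (nxt (x, y)).2 (nxt (x, y)).1 (nxt (x, y)).2 = y := by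
  set r := x / y with hr_def
  have hr : 1 ≤ r := (one_le_div hy).mpr hxy
  have hx : x = r * y := by rw [hr_def, div_mul_cancel₀]; exact ne_of_gt hy
  have hd0 : 0 ≤ 9*r^2 - 4*r - 4 := by nlinarith
  set d := Real.sqrt (9*r^2 - 4*r - 4) with hd_def
  have hd2 : d^2 = 9*r^2 - 4*r - 4 := Real.sq_sqrt hd0
  have hdnn : 0 ≤ d := Real.sqrt_nonneg _
  set t := (3*r - 2 + d) / 2 with ht_def
  have ht1 : 1 ≤ t := by
    rcases le_or_gt (4 - 3*r) 0 with h4 | h4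
    · rw [ht_def]; linarith
    · have : 4 - 3*r ≤ d := by
        rw [hd_def]
        rw [show (4 - 3*r) = Real.sqrt ((4-3*r)^2) from (Real.sqrt_sq (le_of_lt h4)).symm]
        apply Real.sqrt_le_sqrt
        nlinarith
      rw [ht_def]; linarith
  have hqt : t^2 + (2 - 3*r)*t + (2 - 2*r) = 0 := by
    have h2t : 2*t - (3*r - 2) = d := by rw [ht_def]; ring
    have := hd2
    rw [← h2t] at this
    nlinarith [this]
  have htpos : 0 < t := by linarith
  have hb : (nxt (x,y)).2 = y * (t + 2) / (3*t + 2) := by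
    simp only [nxt, hr_def, hd_def, ht_def]
  have ha : (nxt (x,y)).1 = t * (y * (t + 2) / (3*t + 2)) := by
    simp only [nxt, hr_def, hd_def, ht_def]
  set b := y * (t + 2) / (3*t + 2) with hb_def
  have hbpos : 0 < b := by rw [hb_def]; positivity
  rw [hb, ha]
  have h32 : (3*t + 2) ≠ 0 := by positivity
  have ht2 : (t + 2) ≠ 0 := by positivity
  refine ⟨hbpos, ?_, ?_, ?_, ?_⟩
  · nlinarith [hbpos, ht1]
  · unfold psi
    have hs : t * b + b + b = b * (t + 2) := by ring
    rw [hs]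
    have hsne : b * (t + 2) ≠ 0 := by positivity
    rw [hx, hb_def]
    clear_value t d r
    field_simp
    linear_combination hqt
  · unfold psi
    have hs : b + b + t * b = b * (t + 2) := by ring
    rw [hs]
    have hsne : b * (t + 2) ≠ 0 := by positivity
    rw [hb_def]
    field_simp
    ring
  · unfold psi
    have hs : b + t * b + b = b * (t + 2) := by ring
    rw [hs]
    have hsne : b * (t + 2) ≠ 0 := by positivity
    rw [hb_def]
    field_simp
    ring

lemma exists_compat2 {x y : ℝ} (hy : 0 < y) (hxy : y ≤ x) :
    ∃ X Y Z : ℕ → ℝ, IsTwistedCompat X Y Z ∧ X 0 = x ∧ Y 0 = y ∧ Z 0 = y := by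
  set P : ℕ → ℝ × ℝ := fun n => nxt^[n] (x, y) with hP
  have hInv : ∀ n, 0 < (P n).2 ∧ (P n).2 ≤ (P n).1 := by
    intro n
    induction n with
    | zero => exact ⟨hy, hxy⟩
    | succ n ih =>
      have hPs : P (n+1) = nxt (P n) := by
        simp only [hP, Function.iterate_succ_apply']
      rw [hPs]
      have := nxt_spec ih.1 ih.2
      rw [show ((P n).1, (P n).2) = P n from rfl] at this
      exact ⟨this.1, this.2.1⟩
  refine ⟨fun n => (P n).1, fun n => (P n).2, fun n => (P n).2, ⟨?_, ?_⟩, rfl, rfl, rfl⟩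
  · intro n
    exact ⟨lt_of_lt_of_le (hInv n).1 (hInv n).2, (hInv n).1, (hInv n).1⟩
  · intro n
    have hPs : P (n+1) = nxt (P n) := by
      simp only [hP, Function.iterate_succ_apply']
    have := nxt_spec (hInv n).1 (hInv n).2
    rw [show ((P n).1, (P n).2) = P n from rfl] at this
    dsimp only
    rw [hPs]
    exact ⟨this.2.2.1.symm, this.2.2.2.1.symm, this.2.2.2.2.symm⟩

lemma psi_inv_unique {a b a' b' : ℝ} (hb : 0 < b) (hb' : 0 < b') (hba : b ≤ a) (hb'a' : b' ≤ a')
    (h1 : a + psi a b b = a' + psi a' b' b') (h2 : b + psi b b a = b' + psi b' b' a') :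
    a = a' ∧ b = b' := by
  have ha : 0 < a := lt_of_lt_of_le hb hba
  have ha' : 0 < a' := lt_of_lt_of_le hb' hb'a'
  have hu : (0:ℝ) < a + b + b := by linarith
  have hu' : (0:ℝ) < a' + b' + b' := by linarith
  unfold psi at h1 h2
  field_simp at h1 h2
  have key1 : (a*b' - a'*b) * (3*a*a' + 2*a*b' + 2*a'*b - 2*b*b') * (a' + b' + b') = 0 := by
    linear_combination (b' * (b' + b' + a') + 2 * b' * a') * h1 - (a' * (a' + b' + b') + 2 * b' * b') * h2
  have f2pos : 0 < 3*a*a' + 2*a*b' + 2*a'*b - 2*b*b' := by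
    nlinarith [mul_nonneg (sub_nonneg.mpr hba) (sub_nonneg.mpr hb'a'),
      mul_nonneg (sub_nonneg.mpr hba) hb'.le,
      mul_nonneg (sub_nonneg.mpr hb'a') hb.le, mul_pos hb hb']
  have hab : a * b' = a' * b := by
    rcases mul_eq_zero.mp key1 with h | h
    · rcases mul_eq_zero.mp h with h' | h'
      · linarith [sub_eq_zero.mp h']
      · linarith
    · linarith
  have key2 : (b - b') * (3*a*a'*b' + 8*a'*b*b' + 4*b*b'*b') = 0 := by
    linear_combination b' * h2 - (6*b*b' - 2*b'^2) * hab
  have hK : 0 < 3*a*a'*b' + 8*a'*b*b' + 4*b*b'*b' := by positivity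
  have hbb : b = b' := by
    rcases mul_eq_zero.mp key2 with h | h
    · linarith [sub_eq_zero.mp h]
    · linarith
  refine ⟨?_, hbb⟩
  apply mul_right_cancel₀ (ne_of_gt hb')
  rw [hab, hbb]

lemma uniq2 (h : IsTwistedCompat X Y Z) (h' : IsTwistedCompat X' Y' Z')
    (hw : ∀ k, Y k = Z k ∧ Y k ≤ X k) (hw' : ∀ k, Y' k = Z' k ∧ Y' k ≤ X' k)
    (e1 : X 0 = X' 0) (e2 : Y 0 = Y' 0) :
    ∀ n, X n = X' n ∧ Y n = Y' n ∧ Z n = Z' n := by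
  have key : ∀ n, X n = X' n ∧ Y n = Y' n := by
    intro n
    induction n with
    | zero => exact ⟨e1, e2⟩
    | succ n ih =>
      have hx := (h.2 n).1
      have hy := (h.2 n).2.1
      have hx' := (h'.2 n).1
      have hy' := (h'.2 n).2.1
      rw [(hw (n+1)).1.symm] at hx hy
      rw [(hw' (n+1)).1.symm] at hx' hy'
      apply psi_inv_unique (h.1 (n+1)).2.1 (h'.1 (n+1)).2.1 (hw (n+1)).2 (hw' (n+1)).2
      · rw [← hx, ← hx', ih.1]
      · rw [← hy, ← hy', ih.2]
  intro n
  exact ⟨(key n).1, (key n).2, by rw [← (hw n).1, ← (hw' n).1]; exact (key n).2⟩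

lemma uniq (h : IsTwistedCompat X Y Z) (h' : IsTwistedCompat X' Y' Z')
    (e1 : X 0 = X' 0) (e2 : Y 0 = Y' 0) (e3 : Z 0 = Z' 0) :
    ∀ n, X n = X' n ∧ Y n = Y' n ∧ Z n = Z' n := by
  have wA : ∀ (W V U : ℕ → ℝ), (∀ k, W k = V k ∧ V k = U k) → (∀ k, V k = U k ∧ V k ≤ W k) :=
    fun W V U hh k => ⟨(hh k).2, le_of_eq (hh k).1.symm⟩
  have wB : ∀ (W V U : ℕ → ℝ), (∀ k, V k = U k ∧ V k < W k) → (∀ k, V k = U k ∧ V k ≤ W k) :=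
    fun W V U hh k => ⟨(hh k).1, le_of_lt (hh k).2⟩
  have cyc : ∀ n, Y n = Y' n ∧ Z n = Z' n ∧ X n = X' n → X n = X' n ∧ Y n = Y' n ∧ Z n = Z' n :=
    fun n hh => ⟨hh.2.2, hh.1, hh.2.1⟩
  rcases trichotomy h with hA | hB | hC | hD <;> rcases trichotomy h' with hA' | hB' | hC' | hD'
  · exact uniq2 h h' (wA _ _ _ hA) (wA _ _ _ hA') e1 e2
  · exfalso; obtain ⟨q1, q2⟩ := hA 0; obtain ⟨q3, q4⟩ := hB' 0; linarith
  · exfalso; obtain ⟨q1, q2⟩ := hA 0; obtain ⟨q3, q4⟩ := hC' 0; linarith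
  · exfalso; obtain ⟨q1, q2⟩ := hA 0; obtain ⟨q3, q4⟩ := hD' 0; linarith
  · exfalso; obtain ⟨q1, q2⟩ := hB 0; obtain ⟨q3, q4⟩ := hA' 0; linarith
  · exact uniq2 h h' (wB _ _ _ hB) (wB _ _ _ hB') e1 e2
  · exfalso; obtain ⟨q1, q2⟩ := hB 0; obtain ⟨q3, q4⟩ := hC' 0; linarith
  · exfalso; obtain ⟨q1, q2⟩ := hB 0; obtain ⟨q3, q4⟩ := hD' 0; linarith
  · exfalso; obtain ⟨q1, q2⟩ := hC 0; obtain ⟨q3, q4⟩ := hA' 0; linarith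
  · exfalso; obtain ⟨q1, q2⟩ := hC 0; obtain ⟨q3, q4⟩ := hB' 0; linarith
  · intro n
    exact cyc n ((uniq2 (compat_cyclic h) (compat_cyclic h')
      (wB _ _ _ hC) (wB _ _ _ hC') e2 e3 n))
  · exfalso; obtain ⟨q1, q2⟩ := hC 0; obtain ⟨q3, q4⟩ := hD' 0; linarith
  · exfalso; obtain ⟨q1, q2⟩ := hD 0; obtain ⟨q3, q4⟩ := hA' 0; linarith
  · exfalso; obtain ⟨q1, q2⟩ := hD 0; obtain ⟨q3, q4⟩ := hB' 0; linarith
  · exfalso; obtain ⟨q1, q2⟩ := hD 0; obtain ⟨q3, q4⟩ := hC' 0; linarith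
  · intro n
    have := uniq2 (compat_cyclic (compat_cyclic h)) (compat_cyclic (compat_cyclic h'))
      (wB _ _ _ hD) (wB _ _ _ hD') e3 e1 n
    exact ⟨this.2.1, this.2.2, this.1⟩

theorem stmt16 (x0 y0 z0 : ℝ) (hx : 0 < x0) (hy : 0 < y0) (hz : 0 < z0) :
    ((∃ X Y Z : ℕ → ℝ, IsTwistedCompat X Y Z ∧ X 0 = x0 ∧ Y 0 = y0 ∧ Z 0 = z0) ↔
      ((y0 = z0 ∧ y0 ≤ x0) ∨ (z0 = x0 ∧ z0 ≤ y0) ∨ (x0 = y0 ∧ x0 ≤ z0))) ∧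
    (∀ X Y Z : ℕ → ℝ, IsTwistedCompat X Y Z → X 0 = x0 → Y 0 = y0 → Z 0 = z0 →
      y0 = z0 → y0 ≤ x0 → ∀ n, Y n = Z n ∧ Y n ≤ X n) ∧
    (∀ X Y Z X' Y' Z' : ℕ → ℝ, IsTwistedCompat X Y Z → IsTwistedCompat X' Y' Z' →
      X 0 = x0 → Y 0 = y0 → Z 0 = z0 → X' 0 = x0 → Y' 0 = y0 → Z' 0 = z0 →
      ∀ n, X n = X' n ∧ Y n = Y' n ∧ Z n = Z' n) := by
  refine ⟨⟨?_, ?_⟩, ?_, ?_⟩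
  · rintro ⟨X, Y, Z, h, hX, hY, hZ⟩
    subst hX; subst hY; subst hZ
    rcases trichotomy h with hA | hB | hC | hD
    · exact Or.inl ⟨(hA 0).2, le_of_eq (hA 0).1.symm⟩
    · exact Or.inl ⟨(hB 0).1, le_of_lt (hB 0).2⟩
    · exact Or.inr (Or.inl ⟨(hC 0).1, le_of_lt (hC 0).2⟩)
    · exact Or.inr (Or.inr ⟨(hD 0).1, le_of_lt (hD 0).2⟩)
  · rintro (⟨h1, h2⟩ | ⟨h1, h2⟩ | ⟨h1, h2⟩)
    · obtain ⟨X, Y, Z, h, hX, hY, hZ⟩ := exists_compat2 hy h2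
      exact ⟨X, Y, Z, h, hX, hY, by rw [hZ, h1]⟩
    · obtain ⟨X, Y, Z, h, hX, hY, hZ⟩ := exists_compat2 hz h2
      exact ⟨Z, X, Y, compat_cyclic (compat_cyclic h), by rw [hZ, h1], hX, hY⟩
    · obtain ⟨X, Y, Z, h, hX, hY, hZ⟩ := exists_compat2 hx h2
      exact ⟨Y, Z, X, compat_cyclic h, hY, by rw [hZ, h1], hX⟩
  · intro X Y Z h hX hY hZ hyz hyx
    subst hX; subst hY; subst hZ
    rcases trichotomy h with hA | hB | hC | hD
    · exact fun n => ⟨(hA n).2, le_of_eq (hA n).1.symm⟩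
    · exact fun n => ⟨(hB n).1, le_of_lt (hB n).2⟩
    · exfalso; obtain ⟨q1, q2⟩ := hC 0; linarith
    · exfalso; obtain ⟨q1, q2⟩ := hD 0; linarith
  · intro X Y Z X' Y' Z' h h' hX hY hZ hX' hY' hZ'
    exact uniq h h' (by rw [hX, hX']) (by rw [hY, hY']) (by rw [hZ, hZ'])
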